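/- The coefficient of q^N in Σ_{n≥0} (−aq;q)_n b^n q^{n(n+1)/2}/(bq;q)_n, viewed as a polynomial in a and b, equals Σ over pairs (π₁,π₂) with π₁ a partition into distinct parts each ≤ n, π₂ a partition into exactly n distinct parts, |π₁|+|π₂|=N, of a^{n(π₁)} b^{π₂'}, where n(π₁) is the number of parts of π₁ and π₂' the largest part of π₂; i.e. Σ_{n≥0} (−aq;q)_n b^n q^{n(n+1)/2}/(bq;q)_n = Σ_{n≥0} Σ_{(π₁,π₂)∈D_{≤n}×D_n} a^{n(π₁)} b^{π₂'} q^{|π₁|+|π₂|}. -/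

import Mathlib

open Finset

/-- The product (coefficient-wise convergence) topology on formal power series. -/
noncomputable instance : TopologicalSpace (MvPowerSeries (Fin 3) ℚ) :=
  inferInstanceAs (TopologicalSpace ((Fin 3 →₀ ℕ) → ℚ))

/-- The variable `a`. -/
noncomputable def a : MvPowerSeries (Fin 3) ℚ := MvPowerSeries.X 0

/-- The variable `b`. -/
noncomputable def b : MvPowerSeries (Fin 3) ℚ := MvPowerSeries.X 1

/-- The variable `q`. -/
noncomputable def q : MvPowerSeries (Fin 3) ℚ := MvPowerSeries.X 2

/-- The finite q-Pochhammer symbol `(u; v)_n = ∏_{k=0}^{n-1} (1 - u v^k)`. -/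
noncomputable def poch (u v : MvPowerSeries (Fin 3) ℚ) (n : ℕ) : MvPowerSeries (Fin 3) ℚ :=
  ∏ k ∈ range n, (1 - u * v ^ k)

/-- Partitions of `m` into distinct parts, all at most `n`. -/
noncomputable def Dle (n m : ℕ) : Finset (Nat.Partition m) :=
  (Nat.Partition.distincts m).filter fun p => ∀ i ∈ p.parts, i ≤ n

/-- Partitions of `M` into exactly `n` distinct parts. -/
noncomputable def Dexact (n M : ℕ) : Finset (Nat.Partition M) :=
  (Nat.Partition.distincts M).filter fun p => p.parts.card = n

/-! ### Auxiliary infrastructure -/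

noncomputable instance : T2Space (MvPowerSeries (Fin 3) ℚ) :=
  inferInstanceAs (T2Space ((Fin 3 →₀ ℕ) → ℚ))

noncomputable instance : ContinuousAdd (MvPowerSeries (Fin 3) ℚ) :=
  inferInstanceAs (ContinuousAdd ((Fin 3 →₀ ℕ) → ℚ))

private abbrev R3 := MvPowerSeries (Fin 3) ℚ

lemma hasSum_of_coeff {ι : Type*} (f : ι → R3) (F : R3)
    (h : ∀ d, HasSum (fun i => MvPowerSeries.coeff d (f i)) (MvPowerSeries.coeff d F)) :
    HasSum f F :=
  Pi.hasSum.mpr h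

lemma coeff_hasSum {ι : Type*} (f : ι → R3) (F : R3) (h : HasSum f F) (d : Fin 3 →₀ ℕ) :
    HasSum (fun i => MvPowerSeries.coeff d (f i)) (MvPowerSeries.coeff d F) :=
  Pi.hasSum.mp h d

lemma hasSum_mul_left' {ι : Type*} {f : ι → R3} {F : R3} (c : R3) (h : HasSum f F) :
    HasSum (fun i => c * f i) (c * F) := by
  apply hasSum_of_coeff
  intro d
  have h' := coeff_hasSum f F h
  simp only [MvPowerSeries.coeff_mul]
  exact hasSum_sum fun p _ => (h' p.2).mul_left _

lemma hasSum_shift {f : ℕ → R3} {F : R3} (m : ℕ) (h : HasSum f F) :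
    HasSum (fun N => if m ≤ N then f (N - m) else 0) F := by
  have hi : Function.Injective (fun N => N + m) := add_left_injective m
  rw [← hi.hasSum_iff]
  · convert h using 1; funext N; simp
  · intro x hx
    have : ¬ m ≤ x := by
      rintro hm
      exact hx ⟨x - m, by simp; omega⟩
    simp [this]

lemma summable_of_coeff_support {f : ℕ → R3}
    (h : ∀ d, ∃ K, ∀ n, K ≤ n → MvPowerSeries.coeff d (f n) = 0) : Summable f := by
  have : Summable (fun n => (f n : (Fin 3 →₀ ℕ) → ℚ)) := by
    apply Pi.summable.mpr
    intro d
    obtain ⟨K, hK⟩ := h d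
    exact summable_of_ne_finset_zero (s := Finset.range K)
      (fun n hn => hK n (by simpa using hn))
  exact this

lemma summable_mul_qpow (c : ℕ → R3) : Summable (fun M => c M * q ^ M) := by
  apply summable_of_coeff_support
  intro d
  refine ⟨d 2 + 1, fun M hM => ?_⟩
  rw [q, MvPowerSeries.X_pow_eq, MvPowerSeries.coeff_mul_monomial]
  rw [if_neg]
  intro hle
  have := hle 2
  simp [Finsupp.single_apply] at this
  omega

lemma constantCoeff_poch_bq (n : ℕ) :
    MvPowerSeries.constantCoeff (σ := Fin 3) (R := ℚ) (poch (b * q) q n) = 1 := by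
  rw [poch, map_prod]
  apply Finset.prod_eq_one
  intro k _
  rw [map_sub, map_one, map_mul, map_mul]
  rw [show MvPowerSeries.constantCoeff (σ := Fin 3) (R := ℚ) b = 0 from MvPowerSeries.constantCoeff_X 1]
  ring

lemma tri (n : ℕ) : n * (n + 1) / 2 + (n + 1) = (n + 1) * (n + 2) / 2 := by
  have h1 : (n + 1) * (n + 2) = n * (n + 1) + 2 * (n + 1) := by ring
  have h2 : 2 ∣ n * (n + 1) := (Nat.even_mul_succ_self n).two_dvd
  omega

/-! ### Multiset lemmas -/

lemma mem_Dexact {n M : ℕ} {p : Nat.Partition M} :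
    p ∈ Dexact n M ↔ p.parts.Nodup ∧ Multiset.card p.parts = n := by
  simp [Dexact, Nat.Partition.distincts]

lemma mem_Dle {n m : ℕ} {p : Nat.Partition m} :
    p ∈ Dle n m ↔ p.parts.Nodup ∧ ∀ i ∈ p.parts, i ≤ n := by
  simp [Dle, Nat.Partition.distincts]

lemma Dexact_eq_empty {n M : ℕ} (h : M < n) : Dexact n M = ∅ := by
  rw [Finset.eq_empty_iff_forall_notMem]
  intro p hp
  rw [mem_Dexact] at hp
  have h1 : Multiset.card p.parts • 1 ≤ p.parts.sum :=
    Multiset.card_nsmul_le_sum fun x hx => p.parts_pos hx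
  rw [p.parts_sum, hp.2, smul_eq_mul, mul_one] at h1
  omega

lemma sum_map_pred (s : Multiset ℕ) (h : ∀ i ∈ s, 1 ≤ i) :
    (s.map (· - 1)).sum = s.sum - Multiset.card s := by
  induction s using Multiset.induction with
  | empty => simp
  | cons a s ih =>
    have ha := h a (Multiset.mem_cons_self a s)
    have hs : ∀ i ∈ s, 1 ≤ i := fun i hi => h i (Multiset.mem_cons_of_mem hi)
    have h2 : Multiset.card s • 1 ≤ s.sum := Multiset.card_nsmul_le_sum hs
    rw [smul_eq_mul, mul_one] at h2
    simp only [Multiset.map_cons, Multiset.sum_cons, Multiset.card_cons, ih hs]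
    omega

lemma sum_map_succ (s : Multiset ℕ) : (s.map (· + 1)).sum = s.sum + Multiset.card s := by
  induction s using Multiset.induction with
  | empty => simp
  | cons a s ih => simp [ih]; ring

lemma sup_map_succ (s : Multiset ℕ) (h : s ≠ 0) : (s.map (· + 1)).sup = s.sup + 1 := by
  induction s using Multiset.induction with
  | empty => simp at h
  | cons a s ih =>
    rcases eq_or_ne s 0 with rfl | hs
    · simp
    · simp only [Multiset.map_cons, Multiset.sup_cons, ih hs]
      exact Nat.succ_max_succ a s.sup

lemma sup_cons_one_map_succ (t : Multiset ℕ) : (1 ::ₘ t.map (· + 1)).sup = t.sup + 1 := by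
  rcases eq_or_ne t 0 with rfl | ht
  · simp
  · rw [Multiset.sup_cons, sup_map_succ t ht]
    omega

lemma map_pred_succ (s : Multiset ℕ) (h : ∀ i ∈ s, 1 ≤ i) :
    (s.map (· - 1)).map (· + 1) = s := by
  rw [Multiset.map_map]
  rw [show s = s.map id from (Multiset.map_id s).symm]
  rw [Multiset.map_map]
  apply Multiset.map_congr rfl
  intro x hx
  have := h x hx
  simp only [Function.comp_apply, id_eq]
  omega

lemma map_succ_pred (s : Multiset ℕ) : (s.map (· + 1)).map (· - 1) = s := by
  rw [Multiset.map_map]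
  rw [show (Multiset.map ((· - 1) ∘ (· + 1)) s) = s.map id from ?_, Multiset.map_id]
  apply Multiset.map_congr rfl
  intro x hx
  simp

lemma nodup_map_pred (s : Multiset ℕ) (h : ∀ i ∈ s, 1 ≤ i) (hn : s.Nodup) :
    (s.map (· - 1)).Nodup := by
  refine Multiset.Nodup.map_on ?_ hn
  intro x hx y hy hxy
  have := h x hx; have := h y hy; omega

lemma not_one_mem_erase_one {s : Multiset ℕ} (h : s.Nodup) (h1 : 1 ∈ s) : 1 ∉ s.erase 1 := by
  intro hm
  have hc1 : Multiset.count 1 s = 1 := Multiset.count_eq_one_of_mem h h1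
  have hc2 := Multiset.count_erase_self 1 s
  have hc3 : 0 < Multiset.count 1 (s.erase 1) := Multiset.count_pos.mpr hm
  omega

/-! ### The recursion for `Dexact` -/

section DexactRec

variable {A : Type*} [CommSemiring A]

lemma sum_Dexact_zero (x : A) (M : ℕ) :
    ∑ p ∈ Dexact 0 M, x ^ p.parts.sup = if M = 0 then 1 else 0 := by
  rcases Nat.eq_zero_or_pos M with rfl | hM
  · rw [if_pos rfl]
    have hD : Dexact 0 0 = {(⟨0, by simp, rfl⟩ : Nat.Partition 0)} := by
      apply Finset.eq_singleton_iff_unique_mem.mpr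
      constructor
      · rw [mem_Dexact]; simp
      · intro p _
        apply Nat.Partition.ext
        simp
    rw [hD, Finset.sum_singleton]
    simp
  · rw [if_neg (by omega)]
    have hD : Dexact 0 M = ∅ := by
      rw [Finset.eq_empty_iff_forall_notMem]
      intro p hp
      have hc := (mem_Dexact.mp hp).2
      have := p.parts_sum
      rw [Multiset.card_eq_zero.mp hc] at this
      simp at this
      omega
    rw [hD, Finset.sum_empty]

lemma sum_Dexact_succ (x : A) (n M : ℕ) :
    ∑ p ∈ Dexact (n+1) M, x ^ p.parts.sup
      = if n+1 ≤ M then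
          x * ((∑ p ∈ Dexact n (M-(n+1)), x ^ p.parts.sup)
            + ∑ p ∈ Dexact (n+1) (M-(n+1)), x ^ p.parts.sup)
        else 0 := by
  by_cases hM : n + 1 ≤ M
  swap
  · rw [if_neg hM, Dexact_eq_empty (by omega), Finset.sum_empty]
  rw [if_pos hM]
  rw [← Finset.sum_filter_add_sum_filter_not (Dexact (n+1) M) (fun p => 1 ∈ p.parts)]
  have key1 : ∑ p ∈ (Dexact (n+1) M).filter (fun p => 1 ∈ p.parts), x ^ p.parts.sup
      = ∑ p ∈ Dexact n (M-(n+1)), x ^ (p.parts.sup + 1) := by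
    have base : ∀ p : Nat.Partition M, p ∈ (Dexact (n+1) M).filter (fun p => 1 ∈ p.parts) →
        (p.parts.Nodup ∧ Multiset.card p.parts = n + 1) ∧ 1 ∈ p.parts := by
      intro p hp
      rw [Finset.mem_filter, mem_Dexact] at hp
      exact hp
    have epos : ∀ p : Nat.Partition M, ∀ i ∈ p.parts.erase 1, 1 ≤ i :=
      fun p i hi => p.parts_pos (Multiset.mem_of_mem_erase hi)
    refine Finset.sum_bij'
      (i := fun p hp => ⟨(p.parts.erase 1).map (· - 1), ?_, ?_⟩)
      (j := fun p hp => ⟨1 ::ₘ p.parts.map (· + 1), ?_, ?_⟩) ?_ ?_ ?_ ?_ ?_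
    · intro i hi
      obtain ⟨j, hj, rfl⟩ := Multiset.mem_map.mp hi
      have hj1 := epos _ _ hj
      have hne : j ≠ 1 := by
        rintro rfl
        exact not_one_mem_erase_one (base _ hp).1.1 (base _ hp).2 hj
      omega
    · have hsum : p.parts.sum = M := p.parts_sum
      have hcons := Multiset.cons_erase (base _ hp).2
      have hsum2 : (p.parts.erase 1).sum = M - 1 := by
        have := congrArg Multiset.sum hcons
        rw [Multiset.sum_cons, hsum] at this
        omega
      have hcard : Multiset.card (p.parts.erase 1) = n := by
        rw [Multiset.card_erase_of_mem (base _ hp).2, (base _ hp).1.2]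
        rfl
      rw [sum_map_pred _ (epos p), hsum2, hcard]
      omega
    · intro i hi
      rcases Multiset.mem_cons.mp hi with rfl | hi
      · omega
      · obtain ⟨j, hj, rfl⟩ := Multiset.mem_map.mp hi
        omega
    · rw [Multiset.sum_cons, sum_map_succ, p.parts_sum]
      have : Multiset.card p.parts = n := by
        rw [(mem_Dexact.mp hp).2]
      rw [this]
      omega
    · intro p hp
      rw [mem_Dexact]
      constructor
      · exact nodup_map_pred _ (epos p) ((base p hp).1.1.erase 1)
      · simp only [Multiset.card_map, Multiset.card_erase_of_mem (base p hp).2,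
          (base p hp).1.2]
        rfl
    · intro p hp
      rw [Finset.mem_filter, mem_Dexact]
      have hnd := (mem_Dexact.mp hp).1
      have hc := (mem_Dexact.mp hp).2
      refine ⟨⟨?_, ?_⟩, Multiset.mem_cons_self 1 _⟩
      · rw [Multiset.nodup_cons]
        constructor
        · intro hmem
          obtain ⟨j, hj, hj2⟩ := Multiset.mem_map.mp hmem
          have := p.parts_pos hj
          omega
        · exact hnd.map (fun a b hab => by omega)
      · simp [hc]
    · intro p hp
      apply Nat.Partition.ext
      simp only
      rw [map_pred_succ _ (epos p), Multiset.cons_erase (base p hp).2]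
    · intro p hp
      apply Nat.Partition.ext
      simp only
      rw [Multiset.erase_cons_head, map_succ_pred]
    · intro p hp
      congr 1
      have hcons := (Multiset.cons_erase (base p hp).2).symm
      have hmm : p.parts.erase 1 = ((p.parts.erase 1).map (· - 1)).map (· + 1) :=
        (map_pred_succ _ (epos p)).symm
      calc p.parts.sup = (1 ::ₘ ((p.parts.erase 1).map (· - 1)).map (· + 1)).sup := by
            rw [← hmm, ← hcons]
        _ = ((p.parts.erase 1).map (· - 1)).sup + 1 := sup_cons_one_map_succ _
  have key2 : ∑ p ∈ (Dexact (n+1) M).filter (fun p => ¬ 1 ∈ p.parts), x ^ p.parts.sup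
      = ∑ p ∈ Dexact (n+1) (M-(n+1)), x ^ (p.parts.sup + 1) := by
    have base : ∀ p : Nat.Partition M, p ∈ (Dexact (n+1) M).filter (fun p => ¬ 1 ∈ p.parts) →
        (p.parts.Nodup ∧ Multiset.card p.parts = n + 1) ∧ 1 ∉ p.parts := by
      intro p hp
      rw [Finset.mem_filter, mem_Dexact] at hp
      exact hp
    have ppos : ∀ p : Nat.Partition M, ∀ i ∈ p.parts, 1 ≤ i := fun p i hi => p.parts_pos hi
    refine Finset.sum_bij'
      (i := fun p hp => ⟨p.parts.map (· - 1), ?_, ?_⟩)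
      (j := fun p hp => ⟨p.parts.map (· + 1), ?_, ?_⟩) ?_ ?_ ?_ ?_ ?_
    · intro i hi
      obtain ⟨j, hj, rfl⟩ := Multiset.mem_map.mp hi
      have hj1 := ppos _ _ hj
      have hne : j ≠ 1 := by
        rintro rfl
        exact (base _ hp).2 hj
      omega
    · rw [sum_map_pred _ (ppos p), p.parts_sum, (base _ hp).1.2]
    · intro i hi
      obtain ⟨j, hj, rfl⟩ := Multiset.mem_map.mp hi
      omega
    · rw [sum_map_succ, p.parts_sum, (mem_Dexact.mp hp).2]
      omega
    · intro p hp
      rw [mem_Dexact]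
      exact ⟨nodup_map_pred _ (ppos p) (base p hp).1.1, by simp [(base p hp).1.2]⟩
    · intro p hp
      rw [Finset.mem_filter, mem_Dexact]
      have hnd := (mem_Dexact.mp hp).1
      have hc := (mem_Dexact.mp hp).2
      refine ⟨⟨hnd.map (fun a b hab => by omega), by simp [hc]⟩, ?_⟩
      intro hmem
      obtain ⟨j, hj, hj2⟩ := Multiset.mem_map.mp hmem
      have := p.parts_pos hj
      omega
    · intro p hp
      apply Nat.Partition.ext
      simp only
      rw [map_pred_succ _ (ppos p)]
    · intro p hp
      apply Nat.Partition.ext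
      simp only
      rw [map_succ_pred]
    · intro p hp
      congr 1
      have hne : p.parts.map (· - 1) ≠ 0 := by
        rw [Ne, Multiset.map_eq_zero]
        intro h0
        have := (base p hp).1.2
        rw [h0] at this
        simp at this
      calc p.parts.sup = ((p.parts.map (· - 1)).map (· + 1)).sup := by
            rw [map_pred_succ _ (ppos p)]
        _ = (p.parts.map (· - 1)).sup + 1 := sup_map_succ _ hne
  rw [key1, key2]
  simp only [pow_succ, ← Finset.sum_mul]
  ring

end DexactRec

/-! ### The series `G n` -/

noncomputable def gg (n M : ℕ) : R3 := (∑ p ∈ Dexact n M, b ^ p.parts.sup) * q ^ M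

noncomputable def G (n : ℕ) : R3 := ∑' M, gg n M

lemma hasSum_gg (n : ℕ) : HasSum (gg n) (G n) := (summable_mul_qpow _).hasSum

lemma G_zero : G 0 = 1 := by
  rw [G, tsum_eq_single 0 ?_]
  · rw [gg, sum_Dexact_zero, if_pos rfl, pow_zero, mul_one]
  · intro M hM
    rw [gg, sum_Dexact_zero, if_neg hM, zero_mul]

lemma G_rec (n : ℕ) : G (n+1) = b * q ^ (n+1) * (G n + G (n+1)) := by
  have h1 : HasSum (fun M => b * q ^ (n+1) * (gg n M + gg (n+1) M))
      (b * q ^ (n+1) * (G n + G (n+1))) :=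
    hasSum_mul_left' _ ((hasSum_gg n).add (hasSum_gg (n+1)))
  have h2 := hasSum_shift (n+1) h1
  have h3 : (fun N => if n+1 ≤ N then
        b * q ^ (n+1) * (gg n (N-(n+1)) + gg (n+1) (N-(n+1))) else 0) = gg (n+1) := by
    funext N
    simp only [gg]
    rw [sum_Dexact_succ b n N]
    by_cases hN : n + 1 ≤ N
    · rw [if_pos hN, if_pos hN]
      have hq : q ^ (n+1) * q ^ (N-(n+1)) = q ^ N := by
        rw [← pow_add]
        congr 1
        omega
      rw [← hq]
      ring
    · rw [if_neg hN, if_neg hN, zero_mul]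
  rw [h3] at h2
  exact (hasSum_gg (n+1)).unique h2

lemma poch_mul_G (n : ℕ) : poch (b * q) q n * G n = b ^ n * q ^ (n * (n + 1) / 2) := by
  induction n with
  | zero => simp [poch, G_zero]
  | succ n ih =>
    rw [poch, Finset.prod_range_succ, ← poch]
    have hsub : (1 - b * q * q ^ n) * G (n+1) = b * q ^ (n+1) * G n := by
      linear_combination G_rec n
    calc poch (b * q) q n * (1 - b * q * q ^ n) * G (n+1)
        = poch (b * q) q n * ((1 - b * q * q ^ n) * G (n+1)) := by ring
      _ = poch (b * q) q n * (b * q ^ (n+1) * G n) := by rw [hsub]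
      _ = b * q ^ (n+1) * (poch (b * q) q n * G n) := by ring
      _ = b * q ^ (n+1) * (b ^ n * q ^ (n * (n+1) / 2)) := by rw [ih]
      _ = b ^ (n+1) * q ^ ((n+1) * (n+1+1) / 2) := by
          rw [show (n+1) * (n+1+1) / 2 = n * (n+1) / 2 + (n+1) from (tri n).symm]
          ring

lemma G_closed (n : ℕ) : b ^ n * q ^ (n * (n + 1) / 2) * (poch (b * q) q n)⁻¹ = G n := by
  have hc : MvPowerSeries.constantCoeff (σ := Fin 3) (R := ℚ) (poch (b * q) q n) ≠ 0 := by
    rw [constantCoeff_poch_bq]; exact one_ne_zero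
  rw [← poch_mul_G n]
  calc poch (b * q) q n * G n * (poch (b * q) q n)⁻¹
      = G n * (poch (b * q) q n * (poch (b * q) q n)⁻¹) := by ring
    _ = G n := by rw [MvPowerSeries.mul_inv_cancel _ hc, mul_one]

/-! ### The polynomial `poch (-(a*q)) q n` and `Dle` -/

lemma sigma_bound {n : ℕ} {t : Finset ℕ} (ht : t ⊆ range n) :
    ∑ k ∈ t, (k + 1) ≤ n * (n + 1) / 2 := by
  have h1 : ∑ k ∈ t, (k + 1) ≤ ∑ k ∈ range n, (k + 1) :=
    Finset.sum_le_sum_of_subset ht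
  have h2 : ∑ i ∈ range (n+1), i = (∑ k ∈ range n, (k + 1)) + 0 :=
    Finset.sum_range_succ' (fun i => i) n
  have h3 : ∑ i ∈ range (n+1), i = (n+1) * n / 2 := by
    rw [Finset.sum_range_id]
    simp
  have h4 : (n+1) * n = n * (n+1) := by ring
  omega

lemma Dle_eq_empty {n m : ℕ} (h : n * (n + 1) / 2 < m) : Dle n m = ∅ := by
  rw [Finset.eq_empty_iff_forall_notMem]
  intro p hp
  obtain ⟨hnd, hle⟩ := mem_Dle.mp hp
  have ppos : ∀ i ∈ p.parts, 1 ≤ i := fun i hi => p.parts_pos hi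
  set t : Finset ℕ := ⟨p.parts.map (· - 1), nodup_map_pred _ ppos hnd⟩ with ht
  have hsub : t ⊆ range n := by
    intro x hx
    rw [ht] at hx
    obtain ⟨j, hj, rfl⟩ := Multiset.mem_map.mp hx
    have := ppos j hj
    have := hle j hj
    rw [Finset.mem_range]
    omega
  have hsum : ∑ k ∈ t, (k + 1) = m := by
    have : ∑ k ∈ t, (k + 1) = ((p.parts.map (· - 1)).map (· + 1)).sum := rfl
    rw [this, map_pred_succ _ ppos, p.parts_sum]
  have := sigma_bound hsub
  omega

lemma pochA (n : ℕ) :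
    poch (-(a * q)) q n
      = ∑ m ∈ range (n * (n + 1) / 2 + 1), (∑ p ∈ Dle n m, a ^ Multiset.card p.parts) * q ^ m := by
  have step1 : poch (-(a * q)) q n = ∏ k ∈ range n, (a * q ^ (k+1) + 1) := by
    rw [poch]
    apply Finset.prod_congr rfl
    intro k _
    ring
  have step2 : ∏ k ∈ range n, (a * q ^ (k+1) + 1)
      = ∑ t ∈ (range n).powerset, a ^ t.card * q ^ (∑ k ∈ t, (k + 1)) := by
    rw [Finset.prod_add]
    apply Finset.sum_congr rfl
    intro t _
    rw [Finset.prod_const_one, mul_one, Finset.prod_mul_distrib, Finset.prod_const,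
      Finset.prod_pow_eq_pow_sum]
  have step3 : ∑ t ∈ (range n).powerset, a ^ t.card * q ^ (∑ k ∈ t, (k + 1))
      = ∑ m ∈ range (n * (n + 1) / 2 + 1),
          ∑ t ∈ (range n).powerset.filter (fun t => ∑ k ∈ t, (k + 1) = m),
            a ^ t.card * q ^ (∑ k ∈ t, (k + 1)) := by
    rw [Finset.sum_fiberwise_of_maps_to]
    intro t ht
    rw [Finset.mem_range]
    have := sigma_bound (Finset.mem_powerset.mp ht)
    omega
  rw [step1, step2, step3]
  apply Finset.sum_congr rfl
  intro m _
  have step4 : ∑ t ∈ (range n).powerset.filter (fun t => ∑ k ∈ t, (k + 1) = m),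
      a ^ t.card * q ^ (∑ k ∈ t, (k + 1))
      = ∑ t ∈ (range n).powerset.filter (fun t => ∑ k ∈ t, (k + 1) = m),
          a ^ t.card * q ^ m := by
    apply Finset.sum_congr rfl
    intro t ht
    rw [(Finset.mem_filter.mp ht).2]
  rw [step4, ← Finset.sum_mul]
  congr 1
  have base : ∀ t : Finset ℕ,
      t ∈ (range n).powerset.filter (fun t => ∑ k ∈ t, (k + 1) = m) →
      t ⊆ range n ∧ ∑ k ∈ t, (k + 1) = m := by
    intro t ht
    rw [Finset.mem_filter, Finset.mem_powerset] at ht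
    exact ht
  refine Finset.sum_bij'
    (i := fun t ht => (⟨t.val.map (· + 1), ?_, ?_⟩ : Nat.Partition m))
    (j := fun p hp => (⟨p.parts.map (· - 1),
      nodup_map_pred _ (fun i hi => p.parts_pos hi) (mem_Dle.mp hp).1⟩ : Finset ℕ)) ?_ ?_ ?_ ?_ ?_
  · intro i hi
    obtain ⟨j, _, rfl⟩ := Multiset.mem_map.mp hi
    omega
  · rw [show (t.val.map (· + 1)).sum = ∑ k ∈ t, (k + 1) from rfl, (base t ht).2]
  · intro t ht
    rw [mem_Dle]
    constructor
    · exact t.nodup.map (fun a b hab => by omega)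
    · intro i hi
      obtain ⟨j, hj, rfl⟩ := Multiset.mem_map.mp hi
      have := Finset.mem_range.mp ((base t ht).1 hj)
      omega
  · intro p hp
    rw [Finset.mem_filter, Finset.mem_powerset]
    have ppos : ∀ i ∈ p.parts, 1 ≤ i := fun i hi => p.parts_pos hi
    constructor
    · intro x hx
      obtain ⟨j, hj, rfl⟩ := Multiset.mem_map.mp hx
      have := ppos j hj
      have := (mem_Dle.mp hp).2 j hj
      rw [Finset.mem_range]
      omega
    · show ((p.parts.map (· - 1)).map (· + 1)).sum = m
      rw [map_pred_succ _ ppos, p.parts_sum]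
  · intro t ht
    apply Finset.val_inj.mp
    show (t.val.map (· + 1)).map (· - 1) = t.val
    rw [map_succ_pred]
  · intro p hp
    apply Nat.Partition.ext
    show (p.parts.map (· - 1)).map (· + 1) = p.parts
    rw [map_pred_succ _ (fun i hi => p.parts_pos hi)]
  · intro t ht
    show a ^ t.card = a ^ Multiset.card (t.val.map (· + 1))
    rw [Multiset.card_map]
    rfl

/-! ### Assembling the Cauchy product for a fixed `n` -/

set_option maxHeartbeats 1000000 in
lemma main_n (n : ℕ) :
    poch (-(a * q)) q n * b ^ n * q ^ (n * (n + 1) / 2) * (poch (b * q) q n)⁻¹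
      = ∑' N : ℕ, ∑ m ∈ range (N + 1), ∑ p1 ∈ Dle n m,
          ∑ p2 ∈ Dexact n (N - m), a ^ Multiset.card p1.parts * b ^ p2.parts.sup * q ^ N := by
  set K := n * (n + 1) / 2 + 1 with hK
  set Aterm : ℕ → R3 := fun m => (∑ p ∈ Dle n m, a ^ Multiset.card p.parts) * q ^ m with hAterm
  have hA0 : ∀ m, K ≤ m → Aterm m = 0 := by
    intro m hm
    rw [hAterm]
    simp only
    rw [Dle_eq_empty (show n * (n + 1) / 2 < m by omega), Finset.sum_empty, zero_mul]
  have hL : poch (-(a * q)) q n * b ^ n * q ^ (n * (n + 1) / 2) * (poch (b * q) q n)⁻¹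
      = ∑ m ∈ range K, Aterm m * G n := by
    calc poch (-(a * q)) q n * b ^ n * q ^ (n * (n + 1) / 2) * (poch (b * q) q n)⁻¹
        = (∑ m ∈ range K, Aterm m)
            * (b ^ n * q ^ (n * (n + 1) / 2) * (poch (b * q) q n)⁻¹) := by
          rw [pochA n]; ring
      _ = (∑ m ∈ range K, Aterm m) * G n := by rw [G_closed]
      _ = ∑ m ∈ range K, Aterm m * G n := Finset.sum_mul _ _ _
  have hs : HasSum (fun N => ∑ m ∈ range K, if m ≤ N then Aterm m * gg n (N - m) else 0)
      (∑ m ∈ range K, Aterm m * G n) :=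
    hasSum_sum (fun m _ => hasSum_shift m (hasSum_mul_left' (Aterm m) (hasSum_gg n)))
  rw [hL, ← hs.tsum_eq]
  apply tsum_congr
  intro N
  have hstep : ∑ m ∈ range K, (if m ≤ N then Aterm m * gg n (N - m) else 0)
      = ∑ m ∈ range (N + 1), Aterm m * gg n (N - m) := by
    have hb1 : ∑ m ∈ range K, (if m ≤ N then Aterm m * gg n (N - m) else 0)
        = ∑ m ∈ range (K ⊔ (N + 1)), (if m ≤ N then Aterm m * gg n (N - m) else 0) := by
      apply Finset.sum_subset (Finset.range_subset_range.mpr le_sup_left)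
      intro m _ hm
      rw [Finset.mem_range, not_lt] at hm
      rw [hA0 m hm, zero_mul, ite_self]
    have hb2 : ∑ m ∈ range (N + 1), Aterm m * gg n (N - m)
        = ∑ m ∈ range (K ⊔ (N + 1)), (if m ≤ N then Aterm m * gg n (N - m) else 0) := by
      rw [← Finset.sum_subset (Finset.range_subset_range.mpr le_sup_right)
        (fun m _ hm => if_neg (fun hle =>
          hm (Finset.mem_range.mpr (Nat.lt_succ_of_le hle))))]
      exact Finset.sum_congr rfl fun m hm =>
        (if_pos (Nat.lt_succ_iff.mp (Finset.mem_range.mp hm))).symm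
    rw [hb1, hb2]
  rw [hstep]
  apply Finset.sum_congr rfl
  intro m hm
  have hmN : m ≤ N := by
    have := Finset.mem_range.mp hm
    omega
  rw [hAterm, gg]
  simp only
  have hq : q ^ m * q ^ (N - m) = q ^ N := by
    rw [← pow_add]
    congr 1
    omega
  calc (∑ p ∈ Dle n m, a ^ Multiset.card p.parts) * q ^ m
        * ((∑ p ∈ Dexact n (N - m), b ^ p.parts.sup) * q ^ (N - m))
      = (∑ p ∈ Dle n m, a ^ Multiset.card p.parts)
          * (∑ p ∈ Dexact n (N - m), b ^ p.parts.sup) * q ^ N := by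
        rw [← hq]; ring
    _ = ∑ p1 ∈ Dle n m, ∑ p2 ∈ Dexact n (N - m),
          a ^ Multiset.card p1.parts * b ^ p2.parts.sup * q ^ N := by
        rw [Finset.sum_mul_sum]
        simp only [Finset.sum_mul]

/-- the combinatorial interpretation (2.23): `a` tracks the number of parts
of `π₁ ∈ D_{≤n}` and `b` tracks the largest part of `π₂ ∈ D_n`. -/
theorem combinatorial_interpretation :
    ∑' n : ℕ, poch (-(a * q)) q n * b ^ n * q ^ (n * (n + 1) / 2) * (poch (b * q) q n)⁻¹
      = ∑' n : ℕ, ∑' N : ℕ, ∑ m ∈ range (N + 1), ∑ p1 ∈ Dle n m,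
          ∑ p2 ∈ Dexact n (N - m), a ^ p1.parts.card * b ^ p2.parts.sup * q ^ N := by
  exact tsum_congr main_n
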